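/- Let σ be a finite positive Borel measure on (0, 1/2] and let f(x) = ∫ sin(απ) x^{-α} dσ(α), g(x) = (x^{1/2} + ∫ cos(απ) x^{1/2-α} dσ(α))² + (∫ sin(απ) x^{1/2-α} dσ(α))² for x > 0. Then f/(π g) is a completely monotone function on (0,∞). -/

import Mathlib

open Real Set MeasureTheory Filter Topology Finset
open scoped ContDiff

/-- A function is completely monotone on `(0, ∞)` if it is infinitely differentiable there
and `(-1)^n f^(n)(x) ≥ 0` for all `n ≥ 0` and `x > 0`. -/
def CompletelyMonotoneOn (f : ℝ → ℝ) : Prop :=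
  (∀ x : ℝ, 0 < x → ContDiffAt ℝ ((⊤ : ℕ∞) : WithTop ℕ∞) f x) ∧
    ∀ (n : ℕ) (x : ℝ), 0 < x → 0 ≤ (-1 : ℝ) ^ n * iteratedDeriv n f x

namespace CMaux

noncomputable section

lemma natLE (n : ℕ) : (n : WithTop ℕ∞) ≤ ((⊤ : ℕ∞) : WithTop ℕ∞) := by
  exact_mod_cast le_top

lemma natLT (n : ℕ) : (n : WithTop ℕ∞) < ((⊤ : ℕ∞) : WithTop ℕ∞) := by
  exact_mod_cast ENat.coe_lt_top n

lemma iteratedDeriv_eqOn_within (n : ℕ) (f : ℝ → ℝ) {x : ℝ} (hx : x ∈ Ioi (0:ℝ)) :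
    iteratedDerivWithin n f (Ioi 0) x = iteratedDeriv n f x := by
  rw [iteratedDerivWithin, iteratedDeriv, iteratedFDerivWithin_of_isOpen n isOpen_Ioi hx]

/-! ### Chains of derivatives on `(0,∞)` -/

lemma chain_contDiffOn {D : ℕ → ℝ → ℝ}
    (hD : ∀ n, ∀ x ∈ Ioi (0:ℝ), HasDerivAt (D n) (D (n+1) x) x) (n : ℕ) :
    ContDiffOn ℝ ((⊤ : ℕ∞) : WithTop ℕ∞) (D n) (Ioi 0) := by
  have key : ∀ (m : ℕ) (k : ℕ), ContDiffOn ℝ (m : WithTop ℕ∞) (D k) (Ioi 0) := by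
    intro m
    induction m with
    | zero =>
      intro k
      rw [show ((0:ℕ) : WithTop ℕ∞) = 0 from Nat.cast_zero, contDiffOn_zero]
      exact fun x hx => ((hD k x hx).continuousAt).continuousWithinAt
    | succ m ih =>
      intro k
      rw [show ((m+1:ℕ) : WithTop ℕ∞) = (m : WithTop ℕ∞) + 1 from by push_cast; rfl]
      refine (contDiffOn_succ_iff_deriv_of_isOpen isOpen_Ioi).2
        ⟨fun x hx => (hD k x hx).differentiableAt.differentiableWithinAt, ?_, ?_⟩
      · intro h; exact absurd h (by simp)
      · exact (ih (k+1)).congr fun x hx => (hD k x hx).deriv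
  exact contDiffOn_infty.2 fun m => key m n

lemma chain_iteratedDeriv {D : ℕ → ℝ → ℝ}
    (hD : ∀ n, ∀ x ∈ Ioi (0:ℝ), HasDerivAt (D n) (D (n+1) x) x) (n : ℕ) :
    ∀ x ∈ Ioi (0:ℝ), iteratedDeriv n (D 0) x = D n x := by
  induction n with
  | zero => intro x _; simp
  | succ n ih =>
    intro x hx
    rw [iteratedDeriv_succ,
      (Filter.eventuallyEq_of_mem (Ioi_mem_nhds hx) ih).deriv_eq]
    exact (hD n x hx).deriv

/-! ### The CM predicate on `(0,∞)` and closure properties -/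

def CMo (f : ℝ → ℝ) : Prop :=
  ContDiffOn ℝ ((⊤ : ℕ∞) : WithTop ℕ∞) f (Ioi 0) ∧
    ∀ (n : ℕ), ∀ x ∈ Ioi (0:ℝ), 0 ≤ (-1 : ℝ) ^ n * iteratedDeriv n f x

lemma chain_CMo {D : ℕ → ℝ → ℝ}
    (hD : ∀ n, ∀ x ∈ Ioi (0:ℝ), HasDerivAt (D n) (D (n+1) x) x)
    (hs : ∀ n, ∀ x ∈ Ioi (0:ℝ), 0 ≤ (-1 : ℝ) ^ n * D n x) : CMo (D 0) :=
  ⟨chain_contDiffOn hD 0, fun n x hx => by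
    rw [chain_iteratedDeriv hD n x hx]; exact hs n x hx⟩

lemma CMo.completelyMonotoneOn {f : ℝ → ℝ} (h : CMo f) : CompletelyMonotoneOn f :=
  ⟨fun x hx => (h.1.contDiffAt (Ioi_mem_nhds hx)), fun n x hx => h.2 n x hx⟩

lemma hasDerivAt_iteratedDeriv {f : ℝ → ℝ}
    (hf : ContDiffOn ℝ ((⊤ : ℕ∞) : WithTop ℕ∞) f (Ioi 0)) (k : ℕ) {x : ℝ}
    (hx : x ∈ Ioi (0:ℝ)) :
    HasDerivAt (iteratedDeriv k f) (iteratedDeriv (k+1) f x) x := by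
  have h1 : DifferentiableOn ℝ (iteratedDerivWithin k f (Ioi 0)) (Ioi 0) :=
    hf.differentiableOn_iteratedDerivWithin (natLT k) isOpen_Ioi.uniqueDiffOn
  have hev : iteratedDerivWithin k f (Ioi 0) =ᶠ[𝓝 x] iteratedDeriv k f :=
    Filter.eventuallyEq_of_mem (Ioi_mem_nhds hx) fun y hy => iteratedDeriv_eqOn_within k f hy
  have h2 : DifferentiableAt ℝ (iteratedDeriv k f) x :=
    (((h1 x hx).differentiableAt (Ioi_mem_nhds hx)).congr_of_eventuallyEq hev.symm)
  rw [iteratedDeriv_succ]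
  exact h2.hasDerivAt

lemma leibniz {f g : ℝ → ℝ}
    (hf : ContDiffOn ℝ ((⊤ : ℕ∞) : WithTop ℕ∞) f (Ioi 0))
    (hg : ContDiffOn ℝ ((⊤ : ℕ∞) : WithTop ℕ∞) g (Ioi 0)) (n : ℕ) :
    ∀ x ∈ Ioi (0:ℝ), iteratedDeriv n (fun y => f y * g y) x =
      ∑ k ∈ Finset.range (n+1), (n.choose k : ℝ) *
        (iteratedDeriv k f x * iteratedDeriv (n-k) g x) := by
  induction n with
  | zero => intro x _; simp
  | succ n ih =>
    intro x hx
    have hev : iteratedDeriv n (fun y => f y * g y) =ᶠ[𝓝 x]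
        (fun z => ∑ k ∈ Finset.range (n+1), (n.choose k : ℝ) *
          (iteratedDeriv k f z * iteratedDeriv (n-k) g z)) :=
      Filter.eventuallyEq_of_mem (Ioi_mem_nhds hx) ih
    have hterm : ∀ k ∈ Finset.range (n+1),
        HasDerivAt (fun z => (n.choose k : ℝ) *
            (iteratedDeriv k f z * iteratedDeriv (n-k) g z))
          ((n.choose k : ℝ) * (iteratedDeriv (k+1) f x * iteratedDeriv (n-k) g x
            + iteratedDeriv k f x * iteratedDeriv (n-k+1) g x)) x := fun k _ =>
      (((hasDerivAt_iteratedDeriv hf k hx).mul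
        (hasDerivAt_iteratedDeriv hg (n-k) hx)).const_mul _)
    rw [iteratedDeriv_succ, hev.deriv_eq, (HasDerivAt.fun_sum hterm).deriv,
      Finset.sum_choose_succ_mul
        (fun i j => iteratedDeriv i f x * iteratedDeriv j g x) n]
    simp_rw [mul_add, Finset.sum_add_distrib]
    rw [add_comm]
    congr 1
    refine Finset.sum_congr rfl fun k hk => ?_
    rw [Nat.succ_sub (Nat.lt_succ_iff.1 (Finset.mem_range.1 hk))]

lemma sgn_mul {f g : ℝ → ℝ}
    (hf : ContDiffOn ℝ ((⊤ : ℕ∞) : WithTop ℕ∞) f (Ioi 0))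
    (hg : ContDiffOn ℝ ((⊤ : ℕ∞) : WithTop ℕ∞) g (Ioi 0)) (n : ℕ)
    (hf' : ∀ k, k ≤ n → ∀ x ∈ Ioi (0:ℝ), 0 ≤ (-1 : ℝ) ^ k * iteratedDeriv k f x)
    (hg' : ∀ k, k ≤ n → ∀ x ∈ Ioi (0:ℝ), 0 ≤ (-1 : ℝ) ^ k * iteratedDeriv k g x) :
    ∀ x ∈ Ioi (0:ℝ), 0 ≤ (-1 : ℝ) ^ n * iteratedDeriv n (fun y => f y * g y) x := by
  intro x hx
  rw [leibniz hf hg n x hx, Finset.mul_sum]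
  refine Finset.sum_nonneg fun k hk => ?_
  have hkn : k ≤ n := Nat.lt_succ_iff.1 (Finset.mem_range.1 hk)
  have h1 := hf' k hkn x hx
  have h2 := hg' (n-k) (Nat.sub_le n k) x hx
  have hpow : (-1:ℝ) ^ n = (-1) ^ k * (-1) ^ (n-k) := by
    rw [← pow_add, Nat.add_sub_cancel' hkn]
  calc (0:ℝ) ≤ (n.choose k : ℝ) * (((-1:ℝ) ^ k * iteratedDeriv k f x) *
        ((-1:ℝ) ^ (n-k) * iteratedDeriv (n-k) g x)) :=
        mul_nonneg (Nat.cast_nonneg _) (mul_nonneg h1 h2)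
    _ = (-1:ℝ) ^ n * ((n.choose k : ℝ) *
        (iteratedDeriv k f x * iteratedDeriv (n-k) g x)) := by rw [hpow]; ring

lemma CMo.mul {f g : ℝ → ℝ} (hf : CMo f) (hg : CMo g) : CMo (fun y => f y * g y) :=
  ⟨hf.1.mul hg.1, fun n => sgn_mul hf.1 hg.1 n (fun k _ => hf.2 k) (fun k _ => hg.2 k)⟩

lemma CMo.add {f g : ℝ → ℝ} (hf : CMo f) (hg : CMo g) : CMo (fun y => f y + g y) := by
  refine ⟨hf.1.add hg.1, fun n x hx => ?_⟩
  have : (fun y => f y + g y) = f + g := rfl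
  rw [this, ← iteratedDeriv_eqOn_within n _ hx,
    iteratedDerivWithin_add hx isOpen_Ioi.uniqueDiffOn
      (hf.1.of_le (natLE n) x hx) (hg.1.of_le (natLE n) x hx),
    iteratedDeriv_eqOn_within n _ hx, iteratedDeriv_eqOn_within n _ hx, mul_add]
  exact add_nonneg (hf.2 n x hx) (hg.2 n x hx)

lemma CMo.const_mul {f : ℝ → ℝ} (hf : CMo f) {c : ℝ} (hc : 0 ≤ c) :
    CMo (fun y => c * f y) := by
  refine ⟨contDiffOn_const.mul hf.1, fun n x hx => ?_⟩
  rw [← iteratedDeriv_eqOn_within n _ hx,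
    iteratedDerivWithin_const_mul hx isOpen_Ioi.uniqueDiffOn c (hf.1.of_le (natLE n) x hx),
    iteratedDeriv_eqOn_within n _ hx]
  calc (0:ℝ) ≤ c * ((-1:ℝ)^n * iteratedDeriv n f x) := mul_nonneg hc (hf.2 n x hx)
    _ = (-1:ℝ)^n * (c * iteratedDeriv n f x) := by ring

lemma iteratedDeriv_zero_fun (n : ℕ) : iteratedDeriv n (fun _ : ℝ => (0:ℝ)) = fun _ => 0 := by
  induction n with
  | zero => rfl
  | succ n ih =>
    rw [iteratedDeriv_succ', show deriv (fun _ : ℝ => (0:ℝ)) = fun _ => (0:ℝ) from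
      funext fun x => deriv_const x 0, ih]

lemma CMo.const {c : ℝ} (hc : 0 ≤ c) : CMo (fun _ => c) := by
  refine ⟨contDiffOn_const, fun n x _ => ?_⟩
  cases n with
  | zero => simpa using hc
  | succ m =>
    rw [iteratedDeriv_succ', show deriv (fun _ : ℝ => c) = fun _ => (0:ℝ) from
      funext fun x => deriv_const x c, iteratedDeriv_zero_fun]
    simp

lemma CMo.inv {g : ℝ → ℝ}
    (hg : ContDiffOn ℝ ((⊤ : ℕ∞) : WithTop ℕ∞) g (Ioi 0))
    (hpos : ∀ x ∈ Ioi (0:ℝ), 0 < g x)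
    (hd : ∀ n, ∀ x ∈ Ioi (0:ℝ), 0 ≤ (-1 : ℝ) ^ n * iteratedDeriv n (deriv g) x) :
    CMo (fun y => (g y)⁻¹) := by
  have hne : ∀ x ∈ Ioi (0:ℝ), g x ≠ 0 := fun x hx => (hpos x hx).ne'
  have hu : ContDiffOn ℝ ((⊤ : ℕ∞) : WithTop ℕ∞) (fun y => (g y)⁻¹) (Ioi 0) := hg.inv hne
  have hdg : ContDiffOn ℝ ((⊤ : ℕ∞) : WithTop ℕ∞) (deriv g) (Ioi 0) :=
    ((contDiffOn_infty_iff_deriv_of_isOpen isOpen_Ioi).1 hg).2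
  have huu : ContDiffOn ℝ ((⊤ : ℕ∞) : WithTop ℕ∞) (fun y => (g y)⁻¹ * (g y)⁻¹) (Ioi 0) :=
    hu.mul hu
  have hder : EqOn (deriv (fun y => (g y)⁻¹))
      (fun y => -(deriv g y * ((g y)⁻¹ * (g y)⁻¹))) (Ioi 0) := by
    intro y hy
    have hdiff : DifferentiableAt ℝ g y :=
      ((hg.differentiableOn (by simp)) y hy).differentiableAt (Ioi_mem_nhds hy)
    rw [deriv_fun_inv'' hdiff (hne y hy), div_eq_mul_inv, sq, mul_inv]
    ring
  refine ⟨hu, ?_⟩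
  intro n
  induction n using Nat.strong_induction_on with
  | _ n IH =>
    cases n with
    | zero =>
      intro x hx
      simpa using (inv_nonneg.2 (hpos x hx).le)
    | succ m =>
      intro x hx
      have h1 : iteratedDeriv (m+1) (fun y => (g y)⁻¹) x
          = iteratedDeriv m (deriv (fun y => (g y)⁻¹)) x := by rw [iteratedDeriv_succ']
      have h2 : iteratedDeriv m (deriv (fun y => (g y)⁻¹)) x
          = iteratedDeriv m (fun y => -(deriv g y * ((g y)⁻¹ * (g y)⁻¹))) x :=
        Filter.EventuallyEq.iteratedDeriv_eq m
          (Filter.eventuallyEq_of_mem (Ioi_mem_nhds hx) hder)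
      have h3 : iteratedDeriv m (fun y => -(deriv g y * ((g y)⁻¹ * (g y)⁻¹))) x
          = -iteratedDeriv m (fun y => deriv g y * ((g y)⁻¹ * (g y)⁻¹)) x :=
        iteratedDeriv_neg m _ x
      have h4 : 0 ≤ (-1:ℝ)^m *
          iteratedDeriv m (fun y => deriv g y * ((g y)⁻¹ * (g y)⁻¹)) x := by
        refine sgn_mul hdg huu m (fun k _ => hd k) ?_ x hx
        intro k hk
        refine sgn_mul hu hu k ?_ ?_
        · intro j hj x' hx'
          exact IH j (Nat.lt_succ_of_le (le_trans hj hk)) x' hx'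
        · intro j hj x' hx'
          exact IH j (Nat.lt_succ_of_le (le_trans hj hk)) x' hx'
      rw [h1, h2, h3]
      calc (0:ℝ) ≤ (-1:ℝ)^m *
            iteratedDeriv m (fun y => deriv g y * ((g y)⁻¹ * (g y)⁻¹)) x := h4
        _ = (-1:ℝ)^(m+1) *
            -iteratedDeriv m (fun y => deriv g y * ((g y)⁻¹ * (g y)⁻¹)) x := by
            rw [pow_succ]; ring

/-! ### Mixtures of powers -/

section mix

variable {Ω : Type*} [MeasurableSpace Ω] (μ : Measure Ω) [IsFiniteMeasure μ]

def mixt (c e : Ω → ℝ) : ℝ → ℝ := fun x => ∫ a, c a * x ^ e a ∂μ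

variable {c e : Ω → ℝ}

lemma meas_aux {t : ℝ} (ht : 0 < t) (hc : Measurable c) (he : Measurable e) :
    AEStronglyMeasurable (fun a => c a * t ^ e a) μ := by
  have hfun : (fun a => c a * t ^ e a) = fun a => c a * Real.exp (Real.log t * e a) := by
    funext a; rw [Real.rpow_def_of_pos ht]
  rw [hfun]
  exact (hc.mul ((measurable_const.mul he).exp)).aestronglyMeasurable

lemma rpow_bound {a b t u M : ℝ} (ha : 0 < a) (hat : a ≤ t) (htb : t ≤ b) (hu : |u| ≤ M) :
    t ^ u ≤ a ^ (-M) + b ^ M := by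
  have ht : 0 < t := lt_of_lt_of_le ha hat
  have hM : 0 ≤ M := le_trans (abs_nonneg u) hu
  rcases le_total t 1 with h1 | h1
  · have h2 : t ^ u ≤ t ^ (-M) :=
      Real.rpow_le_rpow_of_exponent_ge ht h1 ((abs_le.1 hu).1)
    have h3 : t ^ (-M) ≤ a ^ (-M) := by
      rw [Real.rpow_neg ht.le, Real.rpow_neg ha.le]
      exact inv_anti₀ (Real.rpow_pos_of_pos ha M)
        (Real.rpow_le_rpow ha.le hat hM)
    have h4 : 0 ≤ b ^ M := Real.rpow_nonneg (le_trans ht.le htb) M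
    linarith
  · have h2 : t ^ u ≤ t ^ M := Real.rpow_le_rpow_of_exponent_le h1 ((abs_le.1 hu).2)
    have h3 : t ^ M ≤ b ^ M := Real.rpow_le_rpow ht.le htb hM
    have h4 : 0 ≤ a ^ (-M) := Real.rpow_nonneg ha.le _
    linarith

lemma mixt_hasDerivAt (hc : Measurable c) (he : Measurable e)
    {K M : ℝ} (hb : ∀ᵐ a ∂μ, |c a| ≤ K ∧ |e a| ≤ M) {x : ℝ} (hx : 0 < x) :
    HasDerivAt (mixt μ c e)
      (mixt μ (fun a => c a * e a) (fun a => e a - 1) x) x := by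
  have hx2 : 0 < x/2 := by linarith
  have hsub : Metric.ball x (x/2) ⊆ Ioo (x/2) (x + x/2) := by
    intro t ht
    rw [Real.ball_eq_Ioo] at ht
    exact ⟨by linarith [ht.1], by linarith [ht.2]⟩
  have key := hasDerivAt_integral_of_dominated_loc_of_deriv_le (μ := μ)
      (F := fun t a => c a * t ^ e a)
      (F' := fun t a => (c a * e a) * t ^ (e a - 1)) (x₀ := x) (s := Metric.ball x (x/2))
      (bound := fun _ => (K * (M+1)) * ((x/2) ^ (-(M+1)) + (x + x/2) ^ (M+1))) (Metric.ball_mem_nhds x hx2)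
      ?_ ?_ ?_ ?_ ?_ ?_
  · exact key.2
  · filter_upwards [eventually_gt_nhds hx] with t ht
    exact meas_aux μ ht hc he
  · refine Integrable.mono'
      (integrable_const (K * ((x/2) ^ (-M) + (x + x/2) ^ M))) (meas_aux μ hx hc he) ?_
    filter_upwards [hb] with a ha
    have hK : 0 ≤ K := le_trans (abs_nonneg _) ha.1
    rw [Real.norm_eq_abs, abs_mul, abs_of_pos (Real.rpow_pos_of_pos hx _)]
    exact mul_le_mul ha.1 (rpow_bound hx2 (by linarith) (by linarith) ha.2)
      (Real.rpow_nonneg hx.le _) hK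
  · exact meas_aux μ hx (hc.mul he) (he.sub measurable_const)
  · filter_upwards [hb] with a ha
    intro t ht
    have ht' := hsub ht
    have ht0 : 0 < t := lt_trans hx2 ht'.1
    have hK : 0 ≤ K := le_trans (abs_nonneg _) ha.1
    have hM : 0 ≤ M := le_trans (abs_nonneg _) ha.2
    rw [Real.norm_eq_abs, abs_mul, abs_mul]
    have hb1 : |c a| * |e a| ≤ K * (M+1) :=
      mul_le_mul ha.1 (le_trans ha.2 (by linarith)) (abs_nonneg _) hK
    have hb2 : |t ^ (e a - 1)| ≤ (x/2) ^ (-(M+1)) + (x + x/2) ^ (M+1) := by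
      rw [abs_of_pos (Real.rpow_pos_of_pos ht0 _)]
      refine rpow_bound hx2 ht'.1.le ht'.2.le ?_
      calc |e a - 1| ≤ |e a| + |(1:ℝ)| := abs_sub _ _
        _ ≤ M + 1 := by rw [abs_one]; linarith
    exact mul_le_mul hb1 hb2 (abs_nonneg _)
      (mul_nonneg hK (by linarith))
  · exact integrable_const _
  · filter_upwards [hb] with a _
    intro t ht
    have ht0 : 0 < t := lt_trans hx2 (hsub ht).1
    have h := (Real.hasDerivAt_rpow_const (x := t) (p := e a) (Or.inl ht0.ne')).const_mul (c a)
    exact h.congr_deriv (by ring)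

def mc (c e : Ω → ℝ) (n : ℕ) : Ω → ℝ := fun a => c a * ∏ i ∈ Finset.range n, (e a - i)

def me (e : Ω → ℝ) (n : ℕ) : Ω → ℝ := fun a => e a - n

lemma abs_sub_nat_le {y M : ℝ} (h : |y| ≤ M) (n : ℕ) : |y - n| ≤ M + n :=
  calc |y - (n:ℝ)| ≤ |y| + |(n:ℝ)| := abs_sub _ _
    _ ≤ M + n := by rw [Nat.abs_cast]; linarith

lemma mixt_chain (hc : Measurable c) (he : Measurable e)
    {K M : ℝ} (hb : ∀ᵐ a ∂μ, |c a| ≤ K ∧ |e a| ≤ M) :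
    ∀ n, ∀ x ∈ Ioi (0:ℝ),
      HasDerivAt (mixt μ (mc c e n) (me e n)) (mixt μ (mc c e (n+1)) (me e (n+1)) x) x := by
  intro n x hx
  have hcn : Measurable (mc c e n) :=
    hc.mul (Finset.measurable_prod _ fun i _ => he.sub measurable_const)
  have hen : Measurable (me e n) := he.sub measurable_const
  have hbn : ∀ᵐ a ∂μ, |mc c e n a| ≤ K * ∏ i ∈ Finset.range n, (M + i)
      ∧ |me e n a| ≤ M + n := by
    filter_upwards [hb] with a ha
    refine ⟨?_, abs_sub_nat_le ha.2 n⟩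
    rw [mc, abs_mul, Finset.abs_prod]
    refine mul_le_mul ha.1 (Finset.prod_le_prod (fun i _ => abs_nonneg _)
      (fun i _ => abs_sub_nat_le ha.2 i)) (Finset.prod_nonneg fun i _ => abs_nonneg _)
      (le_trans (abs_nonneg _) ha.1)
  have h := mixt_hasDerivAt μ hcn hen hbn hx
  have h1 : (fun a => mc c e n a * me e n a) = mc c e (n+1) := by
    funext a; simp only [mc, me]; rw [Finset.prod_range_succ]; ring
  have h2 : (fun a => me e n a - 1) = me e (n+1) := by
    funext a; simp only [me]; push_cast; ring
  rw [h1, h2] at h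
  exact h

lemma mixt_zero_eq : mixt μ (mc c e 0) (me e 0) = mixt μ c e := by
  unfold mixt mc me
  funext x
  simp

lemma mixt_contDiffOn (hc : Measurable c) (he : Measurable e)
    {K M : ℝ} (hb : ∀ᵐ a ∂μ, |c a| ≤ K ∧ |e a| ≤ M) :
    ContDiffOn ℝ ((⊤ : ℕ∞) : WithTop ℕ∞) (mixt μ c e) (Ioi 0) := by
  have h := chain_contDiffOn (D := fun n => mixt μ (mc c e n) (me e n))
    (mixt_chain μ hc he hb) 0
  simp only [mixt_zero_eq] at h
  exact h

lemma mixt_iteratedDeriv (hc : Measurable c) (he : Measurable e)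
    {K M : ℝ} (hb : ∀ᵐ a ∂μ, |c a| ≤ K ∧ |e a| ≤ M) (n : ℕ) {x : ℝ}
    (hx : x ∈ Ioi (0:ℝ)) :
    iteratedDeriv n (mixt μ c e) x = mixt μ (mc c e n) (me e n) x := by
  have h := chain_iteratedDeriv (D := fun n => mixt μ (mc c e n) (me e n))
    (mixt_chain μ hc he hb) n x hx
  simp only [mixt_zero_eq] at h
  exact h

lemma neg_pow_prod (n : ℕ) (h : ℕ → ℝ) :
    (-1:ℝ)^n * ∏ i ∈ Finset.range n, h i = ∏ i ∈ Finset.range n, (-(h i)) := by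
  induction n with
  | zero => simp
  | succ n ih => rw [Finset.prod_range_succ, Finset.prod_range_succ, ← ih, pow_succ]; ring

lemma mixt_CMo (hc : Measurable c) (he : Measurable e) {K M : ℝ}
    (hb : ∀ᵐ a ∂μ, (0 ≤ c a ∧ c a ≤ K) ∧ (-M ≤ e a ∧ e a ≤ 0)) :
    CMo (mixt μ c e) := by
  have habs : ∀ᵐ a ∂μ, |c a| ≤ K ∧ |e a| ≤ M := by
    filter_upwards [hb] with a ha
    constructor
    · rw [abs_le]; constructor <;> [linarith [ha.1.1]; exact ha.1.2]
    · have hM0 : (0:ℝ) ≤ M := by linarith [ha.2.1, ha.2.2]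
      rw [abs_le]; exact ⟨ha.2.1, le_trans ha.2.2 hM0⟩
  refine ⟨mixt_contDiffOn μ hc he habs, fun n x hx => ?_⟩
  rw [mixt_iteratedDeriv μ hc he habs n hx, mixt, ← integral_const_mul]
  refine integral_nonneg_of_ae ?_
  filter_upwards [hb] with a ha
  have hx0 : (0:ℝ) < x := hx
  have h2 : (-1:ℝ)^n * ∏ i ∈ Finset.range n, (e a - i)
      = ∏ i ∈ Finset.range n, ((i:ℝ) - e a) := by
    rw [neg_pow_prod]
    exact Finset.prod_congr rfl fun i _ => by ring
  have key : (-1:ℝ)^n * (mc c e n a * x ^ me e n a)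
      = (c a * (∏ i ∈ Finset.range n, ((i:ℝ) - e a))) * x ^ me e n a := by
    rw [← h2]; simp only [mc]; ring
  rw [key]
  refine mul_nonneg (mul_nonneg ha.1.1 (Finset.prod_nonneg fun i _ => ?_))
    (Real.rpow_nonneg hx0.le _)
  have : e a ≤ (i:ℝ) := le_trans ha.2.2 (Nat.cast_nonneg i)
  linarith

end mix

/-! ### The concrete functions -/

section concrete

variable (σ : Measure ℝ) [IsFiniteMeasure σ]

def Ff : ℝ → ℝ := mixt σ (fun α => Real.sin (α * π)) (fun α => -α)

def Cf : ℝ → ℝ := mixt σ (fun α => Real.cos (α * π)) (fun α => 1/2 - α)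

def Sf : ℝ → ℝ := mixt σ (fun α => Real.sin (α * π)) (fun α => 1/2 - α)

def Cdf : ℝ → ℝ := mixt σ (fun α => Real.cos (α * π) * (1/2 - α)) (fun α => (1/2 - α) - 1)

def Sdf : ℝ → ℝ := mixt σ (fun α => Real.sin (α * π) * (1/2 - α)) (fun α => (1/2 - α) - 1)

def Pf : ℝ → ℝ := fun x => π * ((x ^ (1/2:ℝ) + Cf σ x)^2 + (Sf σ x)^2)

def Qf : ℝ → ℝ := fun x =>
  1 + (mixt σ (fun α => 2 * (Real.cos (α*π) * (1/2 - α))) (fun α => -α) x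
      + mixt σ (fun α => Real.cos (α*π)) (fun α => -α) x)
    + (mixt (σ.prod σ)
        (fun p => 2 * (Real.cos (p.1*π) * (Real.cos (p.2*π) * (1/2 - p.2))))
        (fun p => -p.1 - p.2) x
      + mixt (σ.prod σ)
        (fun p => 2 * (Real.sin (p.1*π) * (Real.sin (p.2*π) * (1/2 - p.2))))
        (fun p => -p.1 - p.2) x)

lemma Qval {x : ℝ} (hx : 0 < x) :
    2 * (x ^ (1/2:ℝ) + Cf σ x) * ((1/2:ℝ) * x ^ ((1/2:ℝ)-1) + Cdf σ x)
      + 2 * Sf σ x * Sdf σ x = Qf σ x := by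
  have h1 : 2 * (x ^ (1/2:ℝ) * ((1/2:ℝ) * x ^ ((1/2:ℝ)-1))) = 1 := by
    have e : x ^ (1/2:ℝ) * x ^ ((1/2:ℝ)-1) = 1 := by
      rw [← Real.rpow_add hx]; norm_num
    calc 2 * (x ^ (1/2:ℝ) * ((1/2:ℝ) * x ^ ((1/2:ℝ)-1)))
        = (x ^ (1/2:ℝ) * x ^ ((1/2:ℝ)-1)) := by ring
      _ = 1 := e
  have hA : 2 * (x ^ (1/2:ℝ) * Cdf σ x)
      = mixt σ (fun α => 2 * (Real.cos (α*π) * (1/2 - α))) (fun α => -α) x := by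
    have h : 2 * (x ^ (1/2:ℝ) * Cdf σ x) = (2 * x ^ (1/2:ℝ)) * Cdf σ x := by ring
    rw [h]
    simp only [Cdf, mixt]
    rw [← integral_const_mul]
    congr 1; funext α
    rw [show -α = (1/2:ℝ) + ((1/2 - α) - 1) by ring, Real.rpow_add hx]
    ring
  have hB : 2 * (Cf σ x * ((1/2:ℝ) * x ^ ((1/2:ℝ)-1)))
      = mixt σ (fun α => Real.cos (α*π)) (fun α => -α) x := by
    have h : 2 * (Cf σ x * ((1/2:ℝ) * x ^ ((1/2:ℝ)-1)))
        = (x ^ ((1/2:ℝ)-1)) * Cf σ x := by ring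
    rw [h]
    simp only [Cf, mixt]
    rw [← integral_const_mul]
    congr 1; funext α
    rw [show -α = ((1/2:ℝ)-1) + (1/2 - α) by ring, Real.rpow_add hx]
    ring
  have hC : 2 * (Cf σ x * Cdf σ x)
      = mixt (σ.prod σ)
        (fun p => 2 * (Real.cos (p.1*π) * (Real.cos (p.2*π) * (1/2 - p.2))))
        (fun p => -p.1 - p.2) x := by
    simp only [Cf, Cdf, mixt]
    rw [← integral_prod_mul, ← integral_const_mul]
    congr 1; funext p
    rw [show -p.1 - p.2 = (1/2 - p.1) + ((1/2 - p.2) - 1) by ring, Real.rpow_add hx]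
    ring
  have hD : 2 * (Sf σ x * Sdf σ x)
      = mixt (σ.prod σ)
        (fun p => 2 * (Real.sin (p.1*π) * (Real.sin (p.2*π) * (1/2 - p.2))))
        (fun p => -p.1 - p.2) x := by
    simp only [Sf, Sdf, mixt]
    rw [← integral_prod_mul, ← integral_const_mul]
    congr 1; funext p
    rw [show -p.1 - p.2 = (1/2 - p.1) + ((1/2 - p.2) - 1) by ring, Real.rpow_add hx]
    ring
  have expand : 2 * (x ^ (1/2:ℝ) + Cf σ x) * ((1/2:ℝ) * x ^ ((1/2:ℝ)-1) + Cdf σ x)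
        + 2 * Sf σ x * Sdf σ x
      = 2 * (x ^ (1/2:ℝ) * ((1/2:ℝ) * x ^ ((1/2:ℝ)-1))) + 2 * (x ^ (1/2:ℝ) * Cdf σ x)
        + 2 * (Cf σ x * ((1/2:ℝ) * x ^ ((1/2:ℝ)-1))) + 2 * (Cf σ x * Cdf σ x)
        + 2 * (Sf σ x * Sdf σ x) := by ring
  rw [expand, h1, hA, hB, hC, hD]
  simp only [Qf]
  ring

end concrete


end

end CMaux

open CMaux

set_option maxHeartbeats 2000000

theorem continuous_boolean_convolution_density_completely_monotone
    (σ : Measure ℝ) [IsFiniteMeasure σ]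
    (hsupp : σ (Set.Ioc (0 : ℝ) (1 / 2))ᶜ = 0) :
    CompletelyMonotoneOn
      (fun x : ℝ =>
        (∫ α, Real.sin (α * π) * x ^ (-α) ∂σ) /
          (π * ((x ^ (1 / 2 : ℝ) + ∫ α, Real.cos (α * π) * x ^ (1 / 2 - α) ∂σ) ^ 2 +
            (∫ α, Real.sin (α * π) * x ^ (1 / 2 - α) ∂σ) ^ 2))) := by
  classical
  -- a.e. support facts
  have hae : ∀ᵐ α ∂σ, α ∈ Set.Ioc (0:ℝ) (1/2) := by
    rw [MeasureTheory.ae_iff]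
    simpa [Set.compl_def] using hsupp
  have haeprod : ∀ᵐ p ∂(σ.prod σ),
      p.1 ∈ Set.Ioc (0:ℝ) (1/2) ∧ p.2 ∈ Set.Ioc (0:ℝ) (1/2) := by
    have key : (σ.prod σ) ((Set.Ioc (0:ℝ) (1/2) ×ˢ Set.Ioc (0:ℝ) (1/2))ᶜ) = 0 := by
      rw [Set.compl_prod_eq_union]
      refine le_antisymm (le_trans (measure_union_le _ _) ?_) (by positivity)
      rw [Measure.prod_prod, Measure.prod_prod, hsupp]
      simp
    filter_upwards [mem_ae_iff.2 key] with p hp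
    exact ⟨hp.1, hp.2⟩
  -- elementary trigonometric bounds
  have htrig : ∀ α ∈ Set.Ioc (0:ℝ) (1/2),
      (0 ≤ Real.sin (α*π) ∧ Real.sin (α*π) ≤ 1) ∧
      (0 ≤ Real.cos (α*π) ∧ Real.cos (α*π) ≤ 1) := by
    intro α hα
    have h1 : (0:ℝ) ≤ α * π := mul_nonneg hα.1.le pi_pos.le
    have h2 : α * π ≤ (1/2) * π := mul_le_mul_of_nonneg_right hα.2 pi_pos.le
    refine ⟨⟨Real.sin_nonneg_of_nonneg_of_le_pi h1 (by linarith [pi_pos]), Real.sin_le_one _⟩,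
      ⟨Real.cos_nonneg_of_mem_Icc ⟨by linarith [pi_pos], by linarith⟩, Real.cos_le_one _⟩⟩
  -- measurability
  have msin : Measurable (fun α : ℝ => Real.sin (α * π)) := by fun_prop
  have mcos : Measurable (fun α : ℝ => Real.cos (α * π)) := by fun_prop
  have mneg : Measurable (fun α : ℝ => -α) := by fun_prop
  have mexp : Measurable (fun α : ℝ => 1/2 - α) := by fun_prop
  -- CM of the numerator
  have hF : CMo (Ff σ) := by
    refine mixt_CMo σ msin mneg (K := 1) (M := 1) ?_
    filter_upwards [hae] with α hα
    obtain ⟨⟨hs0, hs1⟩, _⟩ := htrig α hα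
    exact ⟨⟨hs0, hs1⟩, ⟨by linarith [hα.1, hα.2], by linarith [hα.1]⟩⟩
  -- bounds for the mixtures appearing in C, S and their derivatives
  have hbC : ∀ᵐ α ∂σ, |Real.cos (α*π)| ≤ 1 ∧ |1/2 - α| ≤ 1 := by
    filter_upwards [hae] with α hα
    exact ⟨Real.abs_cos_le_one _, abs_le.2 ⟨by linarith [hα.2], by linarith [hα.1]⟩⟩
  have hbS : ∀ᵐ α ∂σ, |Real.sin (α*π)| ≤ 1 ∧ |1/2 - α| ≤ 1 := by
    filter_upwards [hae] with α hα
    exact ⟨Real.abs_sin_le_one _, abs_le.2 ⟨by linarith [hα.2], by linarith [hα.1]⟩⟩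
  have hCsm : ContDiffOn ℝ ((⊤ : ℕ∞) : WithTop ℕ∞) (Cf σ) (Set.Ioi 0) :=
    mixt_contDiffOn σ mcos mexp hbC
  have hSsm : ContDiffOn ℝ ((⊤ : ℕ∞) : WithTop ℕ∞) (Sf σ) (Set.Ioi 0) :=
    mixt_contDiffOn σ msin mexp hbS
  have hrsm : ContDiffOn ℝ ((⊤ : ℕ∞) : WithTop ℕ∞) (fun y : ℝ => y ^ (1/2:ℝ)) (Set.Ioi 0) :=
    fun y hy => (Real.contDiffAt_rpow_const_of_ne (ne_of_gt hy)).contDiffWithinAt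
  -- positivity of Pf
  have hCpos : ∀ x ∈ Set.Ioi (0:ℝ), 0 ≤ Cf σ x := by
    intro x hx
    refine integral_nonneg_of_ae ?_
    filter_upwards [hae] with α hα
    exact mul_nonneg (htrig α hα).2.1 (Real.rpow_nonneg (le_of_lt hx) _)
  have hPpos : ∀ x ∈ Set.Ioi (0:ℝ), 0 < Pf σ x := by
    intro x hx
    have h1 : 0 < x ^ (1/2:ℝ) + Cf σ x :=
      add_pos_of_pos_of_nonneg (Real.rpow_pos_of_pos hx _) (hCpos x hx)
    exact mul_pos pi_pos (add_pos_of_pos_of_nonneg (pow_pos h1 2) (sq_nonneg _))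
  -- smoothness of Pf
  have hPsm : ContDiffOn ℝ ((⊤ : ℕ∞) : WithTop ℕ∞) (Pf σ) (Set.Ioi 0) :=
    contDiffOn_const.mul (((hrsm.add hCsm).pow 2).add (hSsm.pow 2))
  -- derivative of Pf
  have hPder : ∀ x ∈ Set.Ioi (0:ℝ), HasDerivAt (Pf σ) (π * Qf σ x) x := by
    intro x hx
    have hx0 : (0:ℝ) < x := hx
    have hrd : HasDerivAt (fun y : ℝ => y ^ (1/2:ℝ)) ((1/2:ℝ) * x ^ ((1/2:ℝ) - 1)) x :=
      Real.hasDerivAt_rpow_const (Or.inl hx0.ne')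
    have hCd : HasDerivAt (Cf σ) (Cdf σ x) x := mixt_hasDerivAt σ mcos mexp hbC hx0
    have hSd : HasDerivAt (Sf σ) (Sdf σ x) x := mixt_hasDerivAt σ msin mexp hbS hx0
    have h2 : HasDerivAt (fun y => (y ^ (1/2:ℝ) + Cf σ y)^2 + (Sf σ y)^2)
        (2 * (x ^ (1/2:ℝ) + Cf σ x) * ((1/2:ℝ) * x ^ ((1/2:ℝ)-1) + Cdf σ x)
          + 2 * Sf σ x * Sdf σ x) x := by
      have h := ((hrd.add hCd).pow 2).add (hSd.pow 2)
      exact h.congr_deriv (by simp only [Pi.add_apply]; push_cast; ring)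
    have h3 := h2.const_mul π
    rw [Qval σ hx0] at h3
    exact h3
  -- the Q function is completely monotone
  have hQ : CMo (Qf σ) := by
    have c1 : CMo (fun _ : ℝ => (1:ℝ)) := CMo.const zero_le_one
    have c2a : CMo (mixt σ (fun α => 2 * (Real.cos (α*π) * (1/2 - α))) (fun α => -α)) := by
      refine mixt_CMo σ (by fun_prop) mneg (K := 2) (M := 1) ?_
      filter_upwards [hae] with α hα
      obtain ⟨_, ⟨hc0, hc1⟩⟩ := htrig α hα
      have h1 : (0:ℝ) ≤ 1/2 - α := by linarith [hα.2]
      have h2 : (1/2:ℝ) - α ≤ 1 := by linarith [hα.1]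
      refine ⟨⟨by positivity, by nlinarith⟩, ⟨by linarith [hα.2], by linarith [hα.1]⟩⟩
    have c2b : CMo (mixt σ (fun α => Real.cos (α*π)) (fun α => -α)) := by
      refine mixt_CMo σ mcos mneg (K := 1) (M := 1) ?_
      filter_upwards [hae] with α hα
      obtain ⟨_, ⟨hc0, hc1⟩⟩ := htrig α hα
      exact ⟨⟨hc0, hc1⟩, ⟨by linarith [hα.2], by linarith [hα.1]⟩⟩
    have c3a : CMo (mixt (σ.prod σ)
        (fun p => 2 * (Real.cos (p.1*π) * (Real.cos (p.2*π) * (1/2 - p.2))))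
        (fun p => -p.1 - p.2)) := by
      refine mixt_CMo (σ.prod σ) (by fun_prop) (by fun_prop) (K := 2) (M := 1) ?_
      filter_upwards [haeprod] with p hp
      obtain ⟨_, ⟨hc0, hc1⟩⟩ := htrig p.1 hp.1
      obtain ⟨_, ⟨hd0, hd1⟩⟩ := htrig p.2 hp.2
      have h1 : (0:ℝ) ≤ 1/2 - p.2 := by linarith [hp.2.2]
      have h2 : (1/2:ℝ) - p.2 ≤ 1 := by linarith [hp.2.1]
      have e1 : Real.cos (p.2*π) * (1/2 - p.2) ≤ 1 := by nlinarith
      have e2 : (0:ℝ) ≤ Real.cos (p.2*π) * (1/2 - p.2) := mul_nonneg hd0 h1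
      refine ⟨⟨by positivity, by nlinarith⟩,
        ⟨by linarith [hp.1.2, hp.2.2], by linarith [hp.1.1, hp.2.1]⟩⟩
    have c3b : CMo (mixt (σ.prod σ)
        (fun p => 2 * (Real.sin (p.1*π) * (Real.sin (p.2*π) * (1/2 - p.2))))
        (fun p => -p.1 - p.2)) := by
      refine mixt_CMo (σ.prod σ) (by fun_prop) (by fun_prop) (K := 2) (M := 1) ?_
      filter_upwards [haeprod] with p hp
      obtain ⟨⟨hc0, hc1⟩, _⟩ := htrig p.1 hp.1
      obtain ⟨⟨hd0, hd1⟩, _⟩ := htrig p.2 hp.2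
      have h1 : (0:ℝ) ≤ 1/2 - p.2 := by linarith [hp.2.2]
      have h2 : (1/2:ℝ) - p.2 ≤ 1 := by linarith [hp.2.1]
      have e1 : Real.sin (p.2*π) * (1/2 - p.2) ≤ 1 := by nlinarith
      have e2 : (0:ℝ) ≤ Real.sin (p.2*π) * (1/2 - p.2) := mul_nonneg hd0 h1
      refine ⟨⟨by positivity, by nlinarith⟩,
        ⟨by linarith [hp.1.2, hp.2.2], by linarith [hp.1.1, hp.2.1]⟩⟩
    exact (c1.add (c2a.add c2b)).add (c3a.add c3b)
  -- CM of the inverse of Pf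
  have hPd : ∀ n, ∀ x ∈ Set.Ioi (0:ℝ), 0 ≤ (-1:ℝ)^n * iteratedDeriv n (deriv (Pf σ)) x := by
    intro n x hx
    have hderiv : Set.EqOn (deriv (Pf σ)) (fun y => π * Qf σ y) (Set.Ioi 0) :=
      fun y hy => (hPder y hy).deriv
    rw [Filter.EventuallyEq.iteratedDeriv_eq n
      (Filter.eventuallyEq_of_mem (Ioi_mem_nhds hx) hderiv)]
    exact (hQ.const_mul pi_pos.le).2 n x hx
  have hInv : CMo (fun y => (Pf σ y)⁻¹) := CMo.inv hPsm hPpos hPd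
  have hMain : CMo (fun y => Ff σ y * (Pf σ y)⁻¹) := hF.mul hInv
  have hfun : (fun x : ℝ =>
        (∫ α, Real.sin (α * π) * x ^ (-α) ∂σ) /
          (π * ((x ^ (1 / 2 : ℝ) + ∫ α, Real.cos (α * π) * x ^ (1 / 2 - α) ∂σ) ^ 2 +
            (∫ α, Real.sin (α * π) * x ^ (1 / 2 - α) ∂σ) ^ 2)))
      = fun y => Ff σ y * (Pf σ y)⁻¹ := by
    funext y
    rw [div_eq_mul_inv]
    rfl
  rw [hfun]
  exact hMain.completelyMonotoneOn
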